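/- If A₊ satisfies [Δ, K A₊ K†] = i p K A₊ K† with p ≠ 0 real, Δ ∈ u(n), K ∈ U(n), then the Hermitian matrix H := A₊ + A₊† is sign-reversible by a unitary: there exists U ∈ U(n) of the form K† e^{-φΔ} K with U H U† = −H. -/

import Mathlib

open Matrix

private theorem exp_intertwine' {n : ℕ} (X Y B : Matrix (Fin n) (Fin n) ℂ)
    (h : X * B = B * Y) :
    NormedSpace.exp X * B = B * NormedSpace.exp Y := by
  letI : SeminormedRing (Matrix (Fin n) (Fin n) ℂ) := Matrix.linftyOpSemiNormedRing
  letI : NormedRing (Matrix (Fin n) (Fin n) ℂ) := Matrix.linftyOpNormedRing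
  letI : NormedAlgebra ℂ (Matrix (Fin n) (Fin n) ℂ) := Matrix.linftyOpNormedAlgebra
  have hpow : ∀ k : ℕ, X ^ k * B = B * Y ^ k := by
    intro k
    induction k with
    | zero => simp
    | succ k ih =>
      rw [pow_succ, pow_succ, mul_assoc, h, ← mul_assoc, ih, mul_assoc]
  simp only [NormedSpace.exp_eq_tsum ℂ]
  erw [← (NormedSpace.expSeries_summable' (𝕂 := ℂ) X).tsum_mul_right,
    ← (NormedSpace.expSeries_summable' (𝕂 := ℂ) Y).tsum_mul_left]
  exact tsum_congr fun k => by rw [smul_mul_assoc, mul_smul_comm, hpow]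

private theorem exp_scalar' {n : ℕ} (a : ℂ) :
    NormedSpace.exp (a • (1 : Matrix (Fin n) (Fin n) ℂ)) = Complex.exp a • 1 := by
  letI : SeminormedRing (Matrix (Fin n) (Fin n) ℂ) := Matrix.linftyOpSemiNormedRing
  letI : NormedRing (Matrix (Fin n) (Fin n) ℂ) := Matrix.linftyOpNormedRing
  letI : NormedAlgebra ℂ (Matrix (Fin n) (Fin n) ℂ) := Matrix.linftyOpNormedAlgebra
  have h := NormedSpace.algebraMap_exp_comm (𝔸 := Matrix (Fin n) (Fin n) ℂ) a
  rw [← Complex.exp_eq_exp_ℂ, Algebra.algebraMap_eq_smul_one,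
    Algebra.algebraMap_eq_smul_one] at h
  exact h.symm

private theorem exp_smul_one_add' {n : ℕ} (a : ℂ) (X : Matrix (Fin n) (Fin n) ℂ) :
    NormedSpace.exp (a • (1 : Matrix (Fin n) (Fin n) ℂ) + X)
      = Complex.exp a • NormedSpace.exp X := by
  rw [Matrix.exp_add_of_commute _ _ ((Commute.one_left X).smul_left a), exp_scalar',
    smul_mul_assoc, one_mul]

/-- If `[Δ, K A₊ Kᴴ] = i p • K A₊ Kᴴ` with `p ≠ 0` real, `Δ` skew-Hermitian and
`K` unitary, then `H := A₊ + A₊ᴴ` is sign-reversed by a unitary of the form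
`Kᴴ e^{-φΔ} K`. -/
theorem stmt14 (n : ℕ) (Aplus Δ K : Matrix (Fin n) (Fin n) ℂ)
    (hΔ : Δᴴ = -Δ) (hK : K ∈ Matrix.unitaryGroup (Fin n) ℂ)
    (p : ℝ) (hp : p ≠ 0)
    (heig : Δ * (K * Aplus * Kᴴ) - (K * Aplus * Kᴴ) * Δ =
      (Complex.I * (p : ℂ)) • (K * Aplus * Kᴴ)) :
    ∃ φ : ℝ, ∃ U : Matrix (Fin n) (Fin n) ℂ,
      U = Kᴴ * NormedSpace.exp ((-(φ : ℂ)) • Δ) * K ∧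
      U ∈ Matrix.unitaryGroup (Fin n) ℂ ∧
      U * (Aplus + Aplusᴴ) * Uᴴ = -(Aplus + Aplusᴴ) := by
  have hK1 : Kᴴ * K = 1 := by
    have := hK.1; rwa [Matrix.star_eq_conjTranspose] at this
  have hK2 : K * Kᴴ = 1 := by
    have := hK.2; rwa [Matrix.star_eq_conjTranspose] at this
  set φ : ℝ := Real.pi / p with hφ
  set X : Matrix (Fin n) (Fin n) ℂ := (-(φ : ℂ)) • Δ with hX
  set E := NormedSpace.exp X with hE
  obtain ⟨B, hB⟩ : ∃ B, B = K * Aplus * Kᴴ := ⟨_, rfl⟩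
  rw [← hB] at heig
  have hφp : (φ : ℂ) * (p : ℂ) = (Real.pi : ℂ) := by
    have hpc : (p : ℂ) ≠ 0 := Complex.ofReal_ne_zero.mpr hp
    rw [hφ]; push_cast; field_simp
  have hXH : Xᴴ = -X := by
    rw [hX, Matrix.conjTranspose_smul, hΔ]
    simp
  have hEH : Eᴴ = NormedSpace.exp (-X) := by
    rw [hE, ← Matrix.exp_conjTranspose X, hXH]
  have hEunit : E * Eᴴ = 1 := by
    rw [hEH, hE, ← Matrix.exp_add_of_commute _ _ (Commute.neg_right (Commute.refl X)),
      add_neg_cancel, NormedSpace.exp_zero]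
  -- intertwining for B
  have hΔB : Δ * B = B * Δ + (Complex.I * (p : ℂ)) • B := sub_eq_iff_eq_add'.mp heig
  have hXB : X * B
      = B * ((((-(φ : ℂ)) * (Complex.I * (p : ℂ))) • (1 : Matrix (Fin n) (Fin n) ℂ)) + X) := by
    calc X * B = (-(φ : ℂ)) • (Δ * B) := smul_mul_assoc _ _ _
      _ = (-(φ : ℂ)) • (B * Δ) + ((-(φ : ℂ)) * (Complex.I * (p : ℂ))) • B := by
          rw [hΔB, smul_add, smul_smul]
      _ = B * ((((-(φ : ℂ)) * (Complex.I * (p : ℂ))) • (1 : Matrix (Fin n) (Fin n) ℂ)) + X) := by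
          rw [mul_add, mul_smul_comm, mul_one, hX, mul_smul_comm, add_comm]
  have hcB : Complex.exp ((-(φ : ℂ)) * (Complex.I * (p : ℂ))) = -1 := by
    have h : (-(φ : ℂ)) * (Complex.I * (p : ℂ)) = -((Real.pi : ℂ) * Complex.I) := by
      rw [← hφp]; ring
    rw [h, Complex.exp_neg, Complex.exp_pi_mul_I]
    norm_num
  have hEB : E * B = -(B * E) := by
    have h := exp_intertwine' X _ B hXB
    rw [exp_smul_one_add', hcB, neg_one_smul, mul_neg] at h
    exact h
  -- intertwining for Bᴴ
  have heig' : Δ * Bᴴ - Bᴴ * Δ = (-(Complex.I * (p : ℂ))) • Bᴴ := by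
    have hstar : star (Complex.I * (p : ℂ)) = -(Complex.I * (p : ℂ)) := by simp
    have h := congrArg Matrix.conjTranspose heig
    rw [Matrix.conjTranspose_sub, Matrix.conjTranspose_smul, hstar,
      Matrix.conjTranspose_mul, Matrix.conjTranspose_mul, hΔ] at h
    rwa [Matrix.mul_neg, Matrix.neg_mul, sub_neg_eq_add, neg_add_eq_sub] at h
  have hΔBH : Δ * Bᴴ = Bᴴ * Δ + (-(Complex.I * (p : ℂ))) • Bᴴ := sub_eq_iff_eq_add'.mp heig'
  have hXBH : X * Bᴴ
      = Bᴴ * ((((-(φ : ℂ)) * (-(Complex.I * (p : ℂ)))) • (1 : Matrix (Fin n) (Fin n) ℂ)) + X) := by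
    calc X * Bᴴ = (-(φ : ℂ)) • (Δ * Bᴴ) := smul_mul_assoc _ _ _
      _ = (-(φ : ℂ)) • (Bᴴ * Δ) + ((-(φ : ℂ)) * (-(Complex.I * (p : ℂ)))) • Bᴴ := by
          rw [hΔBH, smul_add, smul_smul]
      _ = Bᴴ * ((((-(φ : ℂ)) * (-(Complex.I * (p : ℂ)))) • (1 : Matrix (Fin n) (Fin n) ℂ)) + X) := by
          rw [mul_add, mul_smul_comm, mul_one, hX, mul_smul_comm, add_comm]
  have hcBH : Complex.exp ((-(φ : ℂ)) * (-(Complex.I * (p : ℂ)))) = -1 := by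
    have h : (-(φ : ℂ)) * (-(Complex.I * (p : ℂ))) = (Real.pi : ℂ) * Complex.I := by
      rw [← hφp]; ring
    rw [h, Complex.exp_pi_mul_I]
  have hEBH : E * Bᴴ = -(Bᴴ * E) := by
    have h := exp_intertwine' X _ Bᴴ hXBH
    rw [exp_smul_one_add', hcBH, neg_one_smul, mul_neg] at h
    exact h
  have hEsum : E * (B + Bᴴ) = -((B + Bᴴ) * E) := by
    rw [mul_add, add_mul, hEB, hEBH, neg_add]
  -- helper cancellation lemmas
  have c1 : ∀ M : Matrix (Fin n) (Fin n) ℂ, K * (Kᴴ * M) = M := fun M => by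
    rw [← Matrix.mul_assoc, hK2, Matrix.one_mul]
  have c2 : ∀ M : Matrix (Fin n) (Fin n) ℂ, Kᴴ * (K * M) = M := fun M => by
    rw [← Matrix.mul_assoc, hK1, Matrix.one_mul]
  have c3 : ∀ M : Matrix (Fin n) (Fin n) ℂ, E * (Eᴴ * M) = M := fun M => by
    rw [← Matrix.mul_assoc, hEunit, Matrix.one_mul]
  have hswap : ∀ M : Matrix (Fin n) (Fin n) ℂ,
      E * ((B + Bᴴ) * M) = -((B + Bᴴ) * (E * M)) := fun M => by
    rw [← Matrix.mul_assoc, hEsum, Matrix.neg_mul, Matrix.mul_assoc]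
  have hH : Aplus + Aplusᴴ = Kᴴ * ((B + Bᴴ) * K) := by
    rw [hB]
    simp only [Matrix.conjTranspose_mul, Matrix.conjTranspose_conjTranspose,
      Matrix.add_mul, Matrix.mul_add, Matrix.mul_assoc, c1, c2]
    rw [hK1]
    simp [Matrix.mul_add]
  refine ⟨φ, Kᴴ * E * K, rfl, ?_, ?_⟩
  · rw [Matrix.mem_unitaryGroup_iff, Matrix.star_eq_conjTranspose]
    simp only [Matrix.conjTranspose_mul, Matrix.conjTranspose_conjTranspose,
      Matrix.mul_assoc, c1, c3]
    exact hK1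
  · rw [hH]
    simp only [Matrix.conjTranspose_mul, Matrix.conjTranspose_conjTranspose,
      Matrix.mul_assoc, Matrix.neg_mul, Matrix.mul_neg, c1, c2, hswap, c3]
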